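/- Let p > 1 and let A, B ∈ ℝ with A·B ≤ 0. Then for all ω₁, ω₂ ∈ ℝ, |ω₁ A - ω₁ B|^{p-2}(ω₁ A - ω₁ B)·ω₁ A - |ω₂ A - ω₂ B|^{p-2}(ω₂ A - ω₂ B)·ω₂ B ≥ |ω₁ A - ω₂ B|^p. -/

import Mathlib

open Real

private lemma key_ineq (p : ℝ) (hp : 1 < p) (a b x y : ℝ) (ha : 0 ≤ a) (hb : 0 ≤ b) :
    |x * a + y * b| ^ p ≤ |x| ^ p * (a + b) ^ (p - 1) * a + |y| ^ p * (a + b) ^ (p - 1) * b := by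
  have hp0 : (0:ℝ) < p := by linarith
  rcases eq_or_lt_of_le (by positivity : (0:ℝ) ≤ a + b) with hc | hc
  · have ha0 : a = 0 := by linarith [hb]
    have hb0 : b = 0 := by linarith [ha]
    simp [ha0, hb0, Real.zero_rpow hp0.ne']
  · set c := a + b with hcdef
    have h1 : |x * a + y * b| ≤ |x| * a + |y| * b := by
      calc |x * a + y * b| ≤ |x * a| + |y * b| := abs_add_le _ _
        _ = |x| * a + |y| * b := by rw [abs_mul, abs_mul, abs_of_nonneg ha, abs_of_nonneg hb]
    have h2 : |x * a + y * b| ^ p ≤ (|x| * a + |y| * b) ^ p :=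
      Real.rpow_le_rpow (abs_nonneg _) h1 hp0.le
    refine h2.trans ?_
    have hconv := (convexOn_rpow hp.le).2 (Set.mem_Ici.mpr (abs_nonneg x))
      (Set.mem_Ici.mpr (abs_nonneg y)) (by positivity : 0 ≤ a / c) (by positivity : 0 ≤ b / c)
      (by field_simp; exact hcdef.symm)
    have key : (a / c * |x| + b / c * |y|) ^ p ≤ a / c * |x| ^ p + b / c * |y| ^ p := hconv
    have hrw : |x| * a + |y| * b = c * (a / c * |x| + b / c * |y|) := by
      field_simp
    rw [hrw, Real.mul_rpow hc.le (by positivity),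
      Real.rpow_sub hc, Real.rpow_one]
    calc c ^ p * (a / c * |x| + b / c * |y|) ^ p
        ≤ c ^ p * (a / c * |x| ^ p + b / c * |y| ^ p) := by
          apply mul_le_mul_of_nonneg_left key (by positivity)
      _ = |x| ^ p * (c ^ p / c) * a + |y| ^ p * (c ^ p / c) * b := by
          field_simp

private lemma term_eq (p : ℝ) (hp : 1 < p) (c : ℝ) (hc : 0 ≤ c) (w s : ℝ) :
    |w * c| ^ (p - 2) * (w * c) * (w * s) = |w| ^ p * c ^ (p - 1) * s := by
  rcases eq_or_ne w 0 with hw | hw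
  · simp [hw, Real.zero_rpow (show p ≠ 0 by linarith)]
  rcases eq_or_lt_of_le hc with hc0 | hc0
  · simp [← hc0, Real.zero_rpow (by intro h; linarith : p - 1 ≠ 0)]
  · have hwpos : 0 < |w| := abs_pos.mpr hw
    have : |w * c| ^ (p - 2) = |w| ^ (p - 2) * c ^ (p - 2) := by
      rw [abs_mul, abs_of_pos hc0, Real.mul_rpow (abs_nonneg _) hc0.le]
    rw [this]
    have h1 : |w| ^ (p - 2) * w * w = |w| ^ p := by
      have : w * w = |w| ^ (2:ℝ) := by
        rw [Real.rpow_two, sq_abs]; ring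
      calc |w| ^ (p-2) * w * w = |w| ^ (p-2) * (w * w) := by ring
        _ = |w| ^ (p-2) * |w| ^ (2:ℝ) := by rw [this]
        _ = |w| ^ p := by rw [← Real.rpow_add hwpos]; ring_nf
    have h2 : c ^ (p - 2) * c = c ^ (p - 1) := by
      calc c ^ (p-2) * c = c ^ (p-2) * c ^ (1:ℝ) := by rw [Real.rpow_one]
        _ = c ^ (p-1) := by rw [← Real.rpow_add hc0]; ring_nf
    calc |w| ^ (p-2) * c ^ (p-2) * (w * c) * (w * s)
        = (|w| ^ (p-2) * w * w) * (c ^ (p-2) * c) * s := by ring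
      _ = |w| ^ p * c ^ (p-1) * s := by rw [h1, h2]

theorem brasco_parini_pointwise_inequality (p A B : ℝ) (hp : 1 < p) (hAB : A * B ≤ 0)
    (ω₁ ω₂ : ℝ) :
    |ω₁ * A - ω₁ * B| ^ (p - 2) * (ω₁ * A - ω₁ * B) * (ω₁ * A) -
        |ω₂ * A - ω₂ * B| ^ (p - 2) * (ω₂ * A - ω₂ * B) * (ω₂ * B) ≥
      |ω₁ * A - ω₂ * B| ^ p := by
  rcases mul_nonpos_iff.mp hAB with ⟨hA, hB⟩ | ⟨hA, hB⟩
  · -- 0 ≤ A, B ≤ 0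
    have hb : 0 ≤ -B := by linarith
    have hc : 0 ≤ A + -B := by linarith
    have e1 : ω₁ * A - ω₁ * B = ω₁ * (A + -B) := by ring
    have e2 : ω₂ * A - ω₂ * B = ω₂ * (A + -B) := by ring
    have e3 : ω₁ * A - ω₂ * B = ω₁ * A + ω₂ * -B := by ring
    rw [e1, e2, e3, term_eq p hp _ hc ω₁ A, term_eq p hp _ hc ω₂ B]
    have h := key_ineq p hp A (-B) ω₁ ω₂ hA hb
    ring_nf at h ⊢
    linarith
  · -- A ≤ 0, 0 ≤ B
    have ha : 0 ≤ -A := by linarith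
    have hc : 0 ≤ -A + B := by linarith
    have e1 : ω₁ * A - ω₁ * B = (-ω₁) * (-A + B) := by ring
    have e2 : ω₂ * A - ω₂ * B = (-ω₂) * (-A + B) := by ring
    have e3 : ω₁ * A - ω₂ * B = -(ω₁ * -A + ω₂ * B) := by ring
    have e4 : ω₁ * A = (-ω₁) * (-A) := by ring
    have e5 : ω₂ * B = (-ω₂) * (-B) := by ring
    rw [e3, e1, e2, e4, e5, term_eq p hp _ hc (-ω₁) (-A), term_eq p hp _ hc (-ω₂) (-B),
      abs_neg]
    have h := key_ineq p hp (-A) B ω₁ ω₂ ha hB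
    simp only [abs_neg] at *
    ring_nf at h ⊢
    linarith
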